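/- Fix integers n ≥ 2 and k with 2 ≤ k ≤ n, and a real v > 0. For positive reals p₁,…,pₙ define g(p₁,…,pₙ) = Σ_{q=0}^{k-1} Σ_{I ⊆ [n], |I| = q} Π_{i∈I} (e^{p_i v} − 1). Let p'₁ = p'₂ = (p₁+p₂)/2 and p'_i = p_i for 3 ≤ i ≤ n. Then g(p₁,…,pₙ) − g(p'₁,…,p'ₙ) = (e^{p₁v/2} − e^{p₂v/2})² · Σ_{I ⊆ [n]∖{1,2}, |I| = k−2} Π_{i∈I} (e^{p_i v} − 1). In particular, if p₁ ≠ p₂ then g(p₁,…,pₙ) > g(p'₁,…,p'ₙ). -/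

import Mathlib

open Finset

/-- `g(p₁,…,pₙ) = Σ_{q=0}^{k-1} Σ_{I ⊆ [n], |I| = q} Π_{i∈I} (e^{p_i v} − 1)`, the integrand
appearing in the integral formula for the expected coupon-collector sample size. -/
noncomputable def gFun (n k : ℕ) (v : ℝ) (p : Fin n → ℝ) : ℝ :=
  ∑ q ∈ Finset.range k, ∑ I ∈ Finset.powersetCard q (Finset.univ : Finset (Fin n)),
    ∏ i ∈ I, (Real.exp (p i * v) - 1)

lemma aux_insert {α : Type*} [DecidableEq α] (f : α → ℝ) (a : α) (s : Finset α)
    (ha : a ∉ s) (q : ℕ) :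
    ∑ I ∈ powersetCard (q + 1) (insert a s), ∏ i ∈ I, f i
      = (∑ I ∈ powersetCard (q + 1) s, ∏ i ∈ I, f i)
        + f a * ∑ I ∈ powersetCard q s, ∏ i ∈ I, f i := by
  rw [powersetCard_succ_insert ha, sum_union, sum_image, mul_sum]
  · congr 1
    refine sum_congr rfl fun I hI => ?_
    rw [prod_insert fun h => ha ((mem_powersetCard.1 hI).1 h)]
  · intro I hI J hJ h
    have hIa : a ∉ I := fun h' => ha ((mem_powersetCard.1 hI).1 h')
    have hJa : a ∉ J := fun h' => ha ((mem_powersetCard.1 hJ).1 h')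
    have := congrArg (Finset.erase · a) h
    simpa [erase_insert hIa, erase_insert hJa] using this
  · rw [disjoint_right]
    intro I hI
    simp only [mem_image] at hI
    obtain ⟨J, hJ, rfl⟩ := hI
    intro hmem
    exact ha ((mem_powersetCard.1 hmem).1 (mem_insert_self a J))

lemma aux_decomp {α : Type*} [DecidableEq α] (f : α → ℝ) (a b : α) (s : Finset α)
    (ha : a ∉ insert b s) (hb : b ∉ s) (m : ℕ) :
    ∑ q ∈ range (m + 2), ∑ I ∈ powersetCard q (insert a (insert b s)), ∏ i ∈ I, f i
      = (∑ q ∈ range (m + 2), ∑ I ∈ powersetCard q s, ∏ i ∈ I, f i)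
        + (f a + f b) * (∑ q ∈ range (m + 1), ∑ I ∈ powersetCard q s, ∏ i ∈ I, f i)
        + f a * f b * (∑ q ∈ range m, ∑ I ∈ powersetCard q s, ∏ i ∈ I, f i) := by
  set E : ℕ → ℝ := fun q => ∑ I ∈ powersetCard q s, ∏ i ∈ I, f i with hE
  set G : ℕ → ℝ := fun q => ∑ I ∈ powersetCard q (insert a (insert b s)), ∏ i ∈ I, f i with hG
  have key : ∀ q : ℕ, ∑ I ∈ powersetCard (q + 1) (insert a (insert b s)), ∏ i ∈ I, f i
      = (∑ I ∈ powersetCard (q + 1) (insert b s), ∏ i ∈ I, f i)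
        + f a * ∑ I ∈ powersetCard q (insert b s), ∏ i ∈ I, f i :=
    fun q => aux_insert f a (insert b s) ha q
  have key2 : ∀ q : ℕ, ∑ I ∈ powersetCard (q + 1) (insert b s), ∏ i ∈ I, f i
      = (∑ I ∈ powersetCard (q + 1) s, ∏ i ∈ I, f i)
        + f b * ∑ I ∈ powersetCard q s, ∏ i ∈ I, f i :=
    fun q => aux_insert f b s hb q
  have full : ∀ q : ℕ, G (q + 2)
      = E (q + 2) + (f a + f b) * E (q + 1) + f a * f b * E q := by
    intro q
    show (fun q => ∑ I ∈ powersetCard q (insert a (insert b s)), ∏ i ∈ I, f i) (q+2) = _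
    simp only [hG, hE]
    rw [key (q+1), key2 (q+1), key2 q]
    ring
  have hG1 : G 1 = E 1 + f a + f b := by
    simp only [hG, hE]
    have h1 := key 0
    have h2 := key2 0
    simp only [powersetCard_zero, sum_singleton, prod_empty, mul_one] at h1 h2
    rw [show (0:ℕ)+1 = 1 from rfl] at h1 h2
    rw [h1, h2]; ring
  have hG0 : G 0 = 1 := by simp [hG, powersetCard_zero]
  have hE0 : E 0 = 1 := by simp [hE, powersetCard_zero]
  have expand : ∀ (F : ℕ → ℝ) (j : ℕ), ∑ q ∈ range (j + 2), F q
      = ∑ q ∈ range j, F (q + 2) + F 1 + F 0 := by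
    intro F j
    rw [Finset.sum_range_succ' _ (j+1), Finset.sum_range_succ' (fun q => F (q+1)) j]
  calc ∑ q ∈ range (m + 2), G q
      = ∑ q ∈ range m, G (q + 2) + G 1 + G 0 := expand G m
    _ = ∑ q ∈ range m, (E (q + 2) + (f a + f b) * E (q + 1) + f a * f b * E q)
        + (E 1 + f a + f b) + 1 := by rw [hG0, hG1]; simp only [full]
    _ = (∑ q ∈ range m, E (q + 2) + E 1 + E 0)
        + (f a + f b) * (∑ q ∈ range m, E (q + 1) + E 0)
        + f a * f b * ∑ q ∈ range m, E q := by
        rw [Finset.sum_add_distrib, Finset.sum_add_distrib, ← Finset.mul_sum,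
          ← Finset.mul_sum, hE0]
        ring
    _ = _ := by
        rw [← expand E m, ← Finset.sum_range_succ' E m]

/-- Fix `n ≥ 2`, `2 ≤ k ≤ n` and `v > 0`.  For positive reals `p₁,…,pₙ`, replacing `p₁, p₂` by
their average `(p₁+p₂)/2` (leaving the other coordinates unchanged) changes `g` by
`(e^{p₁v/2} − e^{p₂v/2})² · Σ_{I ⊆ [n]∖{1,2}, |I| = k−2} Π_{i∈I}(e^{p_i v} − 1)`;
in particular, if `p₁ ≠ p₂` then `g` strictly decreases. -/
theorem symmetrization_identity (n k : ℕ) (hn : 2 ≤ n) (hk : 2 ≤ k) (hkn : k ≤ n)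
    (v : ℝ) (hv : 0 < v) (p : Fin n → ℝ) (hp : ∀ i, 0 < p i) :
    (gFun n k v p -
        gFun n k v (fun i =>
          if i = (⟨0, by omega⟩ : Fin n) ∨ i = (⟨1, by omega⟩ : Fin n) then
            (p ⟨0, by omega⟩ + p ⟨1, by omega⟩) / 2
          else p i) =
      (Real.exp (p ⟨0, by omega⟩ * v / 2) - Real.exp (p ⟨1, by omega⟩ * v / 2)) ^ 2 *
        ∑ I ∈ Finset.powersetCard (k - 2)
            ((Finset.univ : Finset (Fin n)) \ {⟨0, by omega⟩, ⟨1, by omega⟩}),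
          ∏ i ∈ I, (Real.exp (p i * v) - 1)) ∧
    (p ⟨0, by omega⟩ ≠ p ⟨1, by omega⟩ →
      gFun n k v (fun i =>
          if i = (⟨0, by omega⟩ : Fin n) ∨ i = (⟨1, by omega⟩ : Fin n) then
            (p ⟨0, by omega⟩ + p ⟨1, by omega⟩) / 2
          else p i) < gFun n k v p) := by
  obtain ⟨m, rfl⟩ : ∃ m, k = m + 2 := ⟨k - 2, by omega⟩
  set i0 : Fin n := ⟨0, by omega⟩
  set i1 : Fin n := ⟨1, by omega⟩
  have h01 : i0 ≠ i1 := by simp [i0, i1, Fin.ext_iff]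
  set S : Finset (Fin n) := (Finset.univ : Finset (Fin n)) \ {i0, i1} with hS
  have hi1S : i1 ∉ S := by simp [hS]
  have hi0S : i0 ∉ insert i1 S := by simp [hS, h01]
  have huniv : (Finset.univ : Finset (Fin n)) = insert i0 (insert i1 S) := by
    ext x
    by_cases hx0 : x = i0 <;> by_cases hx1 : x = i1 <;> simp [hS, hx0, hx1]
  set p' : Fin n → ℝ := fun i => if i = i0 ∨ i = i1 then (p i0 + p i1) / 2 else p i with hp'
  set f : Fin n → ℝ := fun i => Real.exp (p i * v) - 1 with hf
  set f' : Fin n → ℝ := fun i => Real.exp (p' i * v) - 1 with hf'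
  set E : ℕ → ℝ := fun q => ∑ I ∈ powersetCard q S, ∏ i ∈ I, f i with hE
  -- f' agrees with f on subsets of S
  have hEE : ∀ q, ∑ I ∈ powersetCard q S, ∏ i ∈ I, f' i = E q := by
    intro q
    refine Finset.sum_congr rfl fun I hI => Finset.prod_congr rfl fun i hi => ?_
    have hiS : i ∈ S := (mem_powersetCard.1 hI).1 hi
    have : ¬(i = i0 ∨ i = i1) := by
      simp only [hS, mem_sdiff, mem_insert, mem_singleton] at hiS
      tauto
    simp [hf', hf, hp', this]
  have hgp : gFun n (m + 2) v p
      = (∑ q ∈ range (m + 2), E q) + (f i0 + f i1) * (∑ q ∈ range (m + 1), E q)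
        + f i0 * f i1 * (∑ q ∈ range m, E q) := by
    unfold gFun
    rw [huniv]
    exact aux_decomp f i0 i1 S hi0S hi1S m
  have hgp' : gFun n (m + 2) v p'
      = (∑ q ∈ range (m + 2), E q) + (f' i0 + f' i1) * (∑ q ∈ range (m + 1), E q)
        + f' i0 * f' i1 * (∑ q ∈ range m, E q) := by
    unfold gFun
    rw [huniv]
    have := aux_decomp f' i0 i1 S hi0S hi1S m
    simp only [hEE] at this
    exact this
  set A : ℝ := Real.exp (p i0 * v / 2) with hA
  set B : ℝ := Real.exp (p i1 * v / 2) with hB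
  have hfA : f i0 = A ^ 2 - 1 := by
    simp only [hf, hA, ← Real.exp_add, sq]
    ring_nf
  have hfB : f i1 = B ^ 2 - 1 := by
    simp only [hf, hB, ← Real.exp_add, sq]
    ring_nf
  have hexp : Real.exp ((p i0 + p i1) / 2 * v) = A * B := by
    rw [hA, hB, ← Real.exp_add]
    congr 1
    ring
  have hf'0 : f' i0 = A * B - 1 := by
    show Real.exp (p' i0 * v) - 1 = A * B - 1
    have h0 : p' i0 = (p i0 + p i1) / 2 := if_pos (Or.inl rfl)
    rw [h0, hexp]
  have hf'1 : f' i1 = A * B - 1 := by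
    show Real.exp (p' i1 * v) - 1 = A * B - 1
    have h0 : p' i1 = (p i0 + p i1) / 2 := if_pos (Or.inr rfl)
    rw [h0, hexp]
  have hdiff : gFun n (m + 2) v p - gFun n (m + 2) v p' = (A - B) ^ 2 * E m := by
    rw [hgp, hgp', hfA, hfB, hf'0, hf'1,
      Finset.sum_range_succ (fun q => E q) m]
    ring
  have hmk : m + 2 - 2 = m := by omega
  constructor
  · rw [hdiff, hmk]
  · intro hne
    have hAB : A ≠ B := by
      simp only [hA, hB]
      intro h
      exact hne (by
        have := Real.exp_injective h
        have h2 : p i0 * v = p i1 * v := by linarith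
        exact mul_right_cancel₀ (ne_of_gt hv) h2)
    have hD : 0 < (A - B) ^ 2 := pow_two_pos_of_ne_zero (sub_ne_zero.2 hAB)
    have hEm : 0 < E m := by
      apply Finset.sum_pos
      · intro I hI
        apply Finset.prod_pos
        intro i _
        have : (0:ℝ) < p i * v := mul_pos (hp i) hv
        simp only [hf, sub_pos]
        calc (1:ℝ) = Real.exp 0 := (Real.exp_zero).symm
          _ < Real.exp (p i * v) := Real.exp_lt_exp.2 this
      · apply Finset.powersetCard_nonempty.2
        have : S.card = n - 2 := by
          rw [hS, card_sdiff_of_subset (subset_univ _), card_univ, Fintype.card_fin]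
          simp [card_insert_of_notMem, h01]
        omega
    have : 0 < gFun n (m + 2) v p - gFun n (m + 2) v p' := hdiff ▸ mul_pos hD hEm
    linarith
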